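/- Let B be a bounded selfadjoint operator on a complex Hilbert space H and let S be a closed subspace of H that is B-nonnegative (⟨Bs,s⟩ ≥ 0 for all s ∈ S). Then B is S-weakly complementable if and only if the set {Q*BQ : Q a bounded idempotent on H with N(Q) = S} has a greatest lower bound in the Loewner order on selfadjoint operators. In this case this greatest lower bound equals B_{/S}. -/

import Mathlib

set_option synthInstance.maxHeartbeats 1000000
set_option maxHeartbeats 1000000
set_option linter.unusedSectionVars false


open ContinuousLinearMap

noncomputable section

variable {H : Type*} [NormedAddCommGroup H] [InnerProductSpace ℂ H] [CompleteSpace H]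

/-- The orthogonal projection onto a closed subspace `S`, as an endomorphism of `H`. -/
def projL (S : Submodule ℂ H) [S.HasOrthogonalProjection] : H →L[ℂ] H :=
  S.subtypeL.comp S.orthogonalProjectionOnto

/-- The corner `a = P_S B P_S` of the block decomposition of `B` w.r.t. `H = S ⊕ Sᗮ`. -/
def blockA (B : H →L[ℂ] H) (S : Submodule ℂ H) [S.HasOrthogonalProjection] : H →L[ℂ] H :=
  projL S * B * projL S

/-- The corner `b = P_S B P_{Sᗮ}` of the block decomposition of `B` w.r.t. `H = S ⊕ Sᗮ`. -/
def blockB (B : H →L[ℂ] H) (S : Submodule ℂ H) [S.HasOrthogonalProjection] : H →L[ℂ] H :=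
  projL S * B * (1 - projL S)

/-- The corner `c = P_{Sᗮ} B P_{Sᗮ}` of the block decomposition of `B` w.r.t. `H = S ⊕ Sᗮ`. -/
def blockC (B : H →L[ℂ] H) (S : Submodule ℂ H) [S.HasOrthogonalProjection] : H →L[ℂ] H :=
  (1 - projL S) * B * (1 - projL S)

/-- `m = |a|^{1/2}`: `m` is the (unique) positive fourth root of `a⋆ a`. -/
def IsSqrtAbs (a m : H →L[ℂ] H) : Prop :=
  m.IsPositive ∧ m ^ 4 = adjoint a * a

/-- `B` is `S`-weakly complementable: `range b ⊆ range |a|^{1/2}`. -/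
def IsWeaklyComplementable (B : H →L[ℂ] H) (S : Submodule ℂ H)
    [S.HasOrthogonalProjection] : Prop :=
  ∃ m : H →L[ℂ] H, IsSqrtAbs (blockA B S) m ∧
    LinearMap.range (blockB B S : H →ₗ[ℂ] H) ≤ LinearMap.range (m : H →ₗ[ℂ] H)

/-- `B` is `S`-complementable: `H = S + B⁻¹(Sᗮ)`. -/
def IsComplementable (B : H →L[ℂ] H) (S : Submodule ℂ H) : Prop :=
  S ⊔ Sᗮ.comap (B : H →ₗ[ℂ] H) = ⊤

/-- The set `P(B,S)` of `B`-selfadjoint bounded idempotents onto `S`. -/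
def projSet (B : H →L[ℂ] H) (S : Submodule ℂ H) : Set (H →L[ℂ] H) :=
  {Q | Q * Q = Q ∧ LinearMap.range (Q : H →ₗ[ℂ] H) = S ∧ B * Q = adjoint Q * B}

/-- `Y` is the Schur complement `B_{/S} = [[0,0],[0, c - f⋆ u f]]`, where `f` is the reduced
solution of `b = |a|^{1/2} x` and `a = u |a|` is the polar decomposition of `a`. -/
def IsSchur (B : H →L[ℂ] H) (S : Submodule ℂ H) [S.HasOrthogonalProjection]
    (Y : H →L[ℂ] H) : Prop :=
  ∃ m u f : H →L[ℂ] H,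
    IsSqrtAbs (blockA B S) m ∧
    LinearMap.ker (u : H →ₗ[ℂ] H) = LinearMap.ker (blockA B S : H →ₗ[ℂ] H) ∧
    (∀ x ∈ (LinearMap.ker (blockA B S : H →ₗ[ℂ] H))ᗮ, ‖u x‖ = ‖x‖) ∧
    blockA B S = u * m ^ 2 ∧
    m * f = blockB B S ∧
    LinearMap.range (f : H →ₗ[ℂ] H) ≤ (LinearMap.range (m : H →ₗ[ℂ] H)).topologicalClosure ∧
    Y = blockC B S - adjoint f * (u * f)

/-- The set `M⁻(B,T)`. -/
def Mminus (B : H →L[ℂ] H) (T : Submodule ℂ H) : Set (H →L[ℂ] H) :=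
  {X | IsSelfAdjoint X ∧ (B - X).IsPositive ∧ LinearMap.range (X : H →ₗ[ℂ] H) ≤ T}

/-- The set `M⁺(B,T)`. -/
def Mplus (B : H →L[ℂ] H) (T : Submodule ℂ H) : Set (H →L[ℂ] H) :=
  {X | IsSelfAdjoint X ∧ (X - B).IsPositive ∧ LinearMap.range (X : H →ₗ[ℂ] H) ≤ T}

/-- `Y` is the Loewner maximum of `M`. -/
def IsMaxOf (M : Set (H →L[ℂ] H)) (Y : H →L[ℂ] H) : Prop :=
  Y ∈ M ∧ ∀ X ∈ M, (Y - X).IsPositive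

/-- `Z` is the Loewner minimum of `M`. -/
def IsMinOf (M : Set (H →L[ℂ] H)) (Z : H →L[ℂ] H) : Prop :=
  Z ∈ M ∧ ∀ X ∈ M, (X - Z).IsPositive

/-- `Z` is the greatest lower bound of `M` in the Loewner order on selfadjoint operators. -/
def IsGLBOf (M : Set (H →L[ℂ] H)) (Z : H →L[ℂ] H) : Prop :=
  IsSelfAdjoint Z ∧ (∀ X ∈ M, (X - Z).IsPositive) ∧
    ∀ F : H →L[ℂ] H, IsSelfAdjoint F → (∀ X ∈ M, (X - F).IsPositive) → (Z - F).IsPositive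

/-- `Y` is the least upper bound of `M` in the Loewner order on selfadjoint operators. -/
def IsLUBOf (M : Set (H →L[ℂ] H)) (Y : H →L[ℂ] H) : Prop :=
  IsSelfAdjoint Y ∧ (∀ X ∈ M, (Y - X).IsPositive) ∧
    ∀ F : H →L[ℂ] H, IsSelfAdjoint F → (∀ X ∈ M, (F - X).IsPositive) → (F - Y).IsPositive

/-- A decomposition `S = S₊ ⊕_B S₋` into a `B`-nonnegative and a `B`-nonpositive part. -/
def IsWDecomp (B : H →L[ℂ] H) (S Sp Sm : Submodule ℂ H) : Prop :=
  (∀ x ∈ Sp, ∀ y ∈ Sm, (inner ℂ x y : ℂ) = 0) ∧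
  Sp ⊔ Sm = S ∧
  (∀ x ∈ Sp, 0 ≤ (inner ℂ (B x) x : ℂ).re) ∧
  (∀ x ∈ Sm, (inner ℂ (B x) x : ℂ).re ≤ 0) ∧
  (∀ x ∈ Sp, ∀ y ∈ Sm, (inner ℂ (B x) y : ℂ) = 0)

/-- `Y` is Krein's shorted operator `B_{/T}` of the positive operator `B` to `T`:
the Loewner maximum of `{X : 0 ≤ X ≤ B, range X ⊆ Tᗮ}`. -/
def IsShort (B : H →L[ℂ] H) (T : Submodule ℂ H) (Y : H →L[ℂ] H) : Prop :=
  (Y.IsPositive ∧ (B - Y).IsPositive ∧ LinearMap.range (Y : H →ₗ[ℂ] H) ≤ Tᗮ) ∧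
    ∀ X : H →L[ℂ] H, X.IsPositive → (B - X).IsPositive → LinearMap.range (X : H →ₗ[ℂ] H) ≤ Tᗮ →
      (Y - X).IsPositive

/-- The set `{R⋆ Q⋆ B Q R : Q² = Q, N(Q) = T}`. -/
def comprSet2 (B R : H →L[ℂ] H) (T : Submodule ℂ H) : Set (H →L[ℂ] H) :=
  {X | ∃ Q : H →L[ℂ] H, Q * Q = Q ∧ LinearMap.ker (Q : H →ₗ[ℂ] H) = T ∧
    X = adjoint R * (adjoint Q * B * Q) * R}

/-- The set `{Q⋆ B Q : Q² = Q, N(Q) = S}`. -/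
def comprSet1 (B : H →L[ℂ] H) (S : Submodule ℂ H) : Set (H →L[ℂ] H) :=
  {X | ∃ Q : H →L[ℂ] H, Q * Q = Q ∧ LinearMap.ker (Q : H →ₗ[ℂ] H) = S ∧ X = adjoint Q * B * Q}

/-- The set `N⁻(W,T)` of the Krein space `(H, [x,y] = ⟨Jx,y⟩)`. -/
def Nminus (J W : H →L[ℂ] H) (T : Submodule ℂ H) : Set (H →L[ℂ] H) :=
  {X | IsSelfAdjoint (J * X) ∧ (J * (W - X)).IsPositive ∧ LinearMap.range (X : H →ₗ[ℂ] H) ≤ T}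

/-- The set `N⁺(W,T)` of the Krein space `(H, [x,y] = ⟨Jx,y⟩)`. -/
def Nplus (J W : H →L[ℂ] H) (T : Submodule ℂ H) : Set (H →L[ℂ] H) :=
  {X | IsSelfAdjoint (J * X) ∧ (J * (X - W)).IsPositive ∧ LinearMap.range (X : H →ₗ[ℂ] H) ≤ T}

/-- `Y` is the maximum of `M` in the Krein order induced by `J`. -/
def KMaxOf (J : H →L[ℂ] H) (M : Set (H →L[ℂ] H)) (Y : H →L[ℂ] H) : Prop :=
  Y ∈ M ∧ ∀ X ∈ M, (J * (Y - X)).IsPositive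

/-- `Z` is the minimum of `M` in the Krein order induced by `J`. -/
def KMinOf (J : H →L[ℂ] H) (M : Set (H →L[ℂ] H)) (Z : H →L[ℂ] H) : Prop :=
  Z ∈ M ∧ ∀ X ∈ M, (J * (X - Z)).IsPositive

/-- `E` is a densely defined projection (idempotent) with kernel `N`. -/
def IsDDProj (N : Submodule ℂ H) (E : H →ₗ.[ℂ] H) : Prop :=
  Dense (E.domain : Set H) ∧
  (∃ h : ∀ x : E.domain, E x ∈ E.domain, ∀ x : E.domain, E ⟨E x, h x⟩ = E x) ∧
  (LinearMap.ker E.toFun).map E.domain.subtype = N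

/-- `G` is the (everywhere defined, bounded) composition `E ∘ T`; in particular
`range T ⊆ dom E`. -/
def IsBddComp (E : H →ₗ.[ℂ] H) (T G : H →L[ℂ] H) : Prop :=
  ∃ h : ∀ x : H, T x ∈ E.domain, ∀ x : H, G x = E ⟨T x, h x⟩


section AuxLemmas

local notation "⟪" x ", " y "⟫" => @inner ℂ _ _ x y

variable (S : Submodule ℂ H) [CompleteSpace S]

lemma auxP_mem (x : H) : projL S x ∈ S := Submodule.coe_mem _

lemma auxP_eq {x : H} (hx : x ∈ S) : projL S x = x := Submodule.starProjection_eq_self_iff.mpr hx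

lemma auxP_inner (x y : H) : ⟪projL S x, y⟫ = ⟪x, projL S y⟫ :=
  Submodule.inner_starProjection_left_eq_right S x y

lemma auxP_idem (x : H) : projL S (projL S x) = projL S x := auxP_eq S (auxP_mem S x)

lemma auxP_orth (x : H) : projL S (x - projL S x) = 0 := by
  rw [map_sub, auxP_idem, sub_self]

lemma auxP_sa : IsSelfAdjoint (projL S) := isSelfAdjoint_starProjection S

variable (B : H →L[ℂ] H)

lemma auxA_apply (x : H) : blockA B S x = projL S (B (projL S x)) := rfl

lemma auxB_apply (x : H) : blockB B S x = projL S (B (x - projL S x)) := rfl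

lemma auxC_apply (x : H) : blockC B S x = B (x - projL S x) - projL S (B (x - projL S x)) := rfl

lemma auxQuadC (y : H) : ⟪blockC B S y, y⟫ = ⟪B (y - projL S y), y - projL S y⟫ := by
  rw [auxC_apply, inner_sub_left, auxP_inner, ← inner_sub_right]

lemma auxQuadA {s : H} (hs : s ∈ S) : ⟪blockA B S s, s⟫ = ⟪B s, s⟫ := by
  rw [auxA_apply, auxP_eq S hs, auxP_inner, auxP_eq S hs]

lemma auxQuadB (hB : IsSelfAdjoint B) (y : H) {s : H} (hs : s ∈ S) :
    ⟪blockB B S y, s⟫ = ⟪y - projL S y, B s⟫ := by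
  have hsym := (isSelfAdjoint_iff_isSymmetric).mp hB
  rw [auxB_apply, auxP_inner, auxP_eq S hs]
  exact hsym _ _

lemma auxExpand (hB : IsSelfAdjoint B) (y s : H) (hs : s ∈ S) :
    RCLike.re ⟪B ((y - projL S y) + s), (y - projL S y) + s⟫
      = RCLike.re ⟪blockC B S y, y⟫ + RCLike.re ⟪blockA B S s, s⟫
        + 2 * RCLike.re ⟪blockB B S y, s⟫ := by
  have hsym := (isSelfAdjoint_iff_isSymmetric).mp hB
  rw [auxQuadC, auxQuadA S B hs, auxQuadB S B hB y hs]
  rw [map_add, inner_add_left, inner_add_right, inner_add_right]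
  have h1 : ⟪B (y - projL S y), s⟫ = ⟪y - projL S y, B s⟫ := hsym _ _
  have h2 : RCLike.re ⟪B s, y - projL S y⟫ = RCLike.re ⟪y - projL S y, B s⟫ :=
    inner_re_symm _ _
  simp only [map_add]
  rw [h1, h2]
  ring

lemma auxQ_of_q (q : H →L[ℂ] H) (hq1 : ∀ z, q z ∈ S) (hq2 : ∀ z, q (projL S z) = 0) :
    ((1 - projL S + q) * (1 - projL S + q) = 1 - projL S + q)
      ∧ LinearMap.ker (1 - projL S + q : H →ₗ[ℂ] H) = S := by
  have happ : ∀ x : H, (1 - projL S + q) x = x - projL S x + q x := fun x => rfl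
  have hPq : ∀ x : H, projL S (q x) = q x := fun x => auxP_eq S (hq1 x)
  have hqq : ∀ x : H, q (q x) = 0 := by
    intro x
    have h := hq2 (q x)
    rwa [hPq] at h
  have hPQ : ∀ x : H, projL S ((1 - projL S + q) x) = q x := by
    intro x
    rw [happ, map_add, auxP_orth, hPq, zero_add]
  have hqQ : ∀ x : H, q ((1 - projL S + q) x) = q x := by
    intro x
    rw [happ, map_add, map_sub, hq2, sub_zero, hqq, add_zero]
  constructor
  · ext x
    rw [ContinuousLinearMap.mul_apply, happ ((1 - projL S + q) x), hPQ, hqQ, happ]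
    abel
  · ext x
    simp only [LinearMap.mem_ker, ContinuousLinearMap.coe_coe]
    constructor
    · intro hx
      have h0 : (1 - projL S + q) x = 0 := hx
      have h1 : q x = 0 := by
        have := congrArg (projL S) h0
        rwa [hPQ, map_zero] at this
      rw [happ, h1, add_zero, sub_eq_zero] at h0
      rw [h0]
      exact auxP_mem S x
    · intro hx
      show (1 - projL S + q) x = 0
      have h1 : q x = 0 := by
        have := hq2 x
        rwa [auxP_eq S hx] at this
      rw [happ, h1, auxP_eq S hx, sub_self, add_zero]

lemma auxQ_mem (Q : H →L[ℂ] H) (hQ2 : Q * Q = Q) (hker : LinearMap.ker (Q : H →ₗ[ℂ] H) = S) (y : H) :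
    ∃ s, s ∈ S ∧ Q y = (y - projL S y) + s := by
  refine ⟨Q y - y + projL S y, ?_, by abel⟩
  have h1 : Q y - y ∈ S := by
    rw [← hker]
    refine LinearMap.mem_ker.mpr ?_
    show Q (Q y - y) = 0
    have h2 : Q (Q y) = Q y := by
      have h3 := DFunLike.congr_fun hQ2 y
      simpa [ContinuousLinearMap.mul_apply] using h3
    rw [map_sub, h2, sub_self]
  exact Submodule.add_mem _ h1 (auxP_mem S y)

lemma auxXval (hB : IsSelfAdjoint B) (Q : H →L[ℂ] H) (y s : H) (hs : s ∈ S)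
    (hQy : Q y = (y - projL S y) + s) :
    RCLike.re ⟪(adjoint Q * B * Q) y, y⟫
      = RCLike.re ⟪blockC B S y, y⟫ + RCLike.re ⟪blockA B S s, s⟫
        + 2 * RCLike.re ⟪blockB B S y, s⟫ := by
  have h1 : (adjoint Q * B * Q) y = adjoint Q (B (Q y)) := rfl
  rw [h1, adjoint_inner_left, hQy, auxExpand S B hB y s hs]

lemma auxClosure (m : H →L[ℂ] H) (hm : IsSelfAdjoint m) :
    (LinearMap.range (m : H →ₗ[ℂ] H)).topologicalClosure = (LinearMap.ker (m : H →ₗ[ℂ] H))ᗮ := by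
  have hsym0 := (isSelfAdjoint_iff_isSymmetric).mp hm
  have hsym : ∀ x y : H, ⟪m x, y⟫ = ⟪x, m y⟫ := fun x y => hsym0 x y
  have h1 : (LinearMap.range (m : H →ₗ[ℂ] H))ᗮ = LinearMap.ker (m : H →ₗ[ℂ] H) := by
    ext z
    simp only [Submodule.mem_orthogonal, LinearMap.mem_ker, LinearMap.mem_range,
      ContinuousLinearMap.coe_coe]
    constructor
    · intro h
      refine ext_inner_left ℂ fun v => ?_
      rw [inner_zero_right, ← hsym v z]
      exact h (m v) ⟨v, rfl⟩
    · rintro h u ⟨x, rfl⟩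
      rw [hsym x z, h, inner_zero_right]
  rw [← Submodule.orthogonal_orthogonal_eq_closure, h1]

end AuxLemmas

section SqrtLemmas

local notation "⟪" x ", " y "⟫" => @inner ℂ _ _ x y

variable (S : Submodule ℂ H) [CompleteSpace S] (B : H →L[ℂ] H)

lemma auxA_pos (hB : IsSelfAdjoint B) (hpos : ∀ s ∈ S, 0 ≤ (inner ℂ (B s) s : ℂ).re) :
    (blockA B S).IsPositive := by
  constructor
  · refine isSelfAdjoint_iff_isSymmetric.mp ?_
    show star (projL S * B * projL S) = projL S * B * projL S
    rw [star_mul, star_mul, (auxP_sa S).star_eq, hB.star_eq, mul_assoc]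
  · intro x
    show 0 ≤ RCLike.re ⟪blockA B S x, x⟫
    rw [auxA_apply, auxP_inner]
    have h := hpos (projL S x) (auxP_mem S x)
    simpa [RCLike.re_to_complex] using h

lemma auxA_nonneg (hB : IsSelfAdjoint B) (hpos : ∀ s ∈ S, 0 ≤ (inner ℂ (B s) s : ℂ).re) :
    0 ≤ blockA B S := (nonneg_iff_isPositive _).mpr (auxA_pos S B hB hpos)

lemma auxm_pos : (CFC.sqrt (blockA B S)).IsPositive :=
  (nonneg_iff_isPositive _).mp (CFC.sqrt_nonneg _)

lemma auxm_sa : IsSelfAdjoint (CFC.sqrt (blockA B S)) := (auxm_pos S B).isSelfAdjoint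

lemma auxm_mul (hB : IsSelfAdjoint B) (hpos : ∀ s ∈ S, 0 ≤ (inner ℂ (B s) s : ℂ).re) :
    CFC.sqrt (blockA B S) * CFC.sqrt (blockA B S) = blockA B S :=
  CFC.sqrt_mul_sqrt_self _ (auxA_nonneg S B hB hpos)

lemma auxm_app (hB : IsSelfAdjoint B) (hpos : ∀ s ∈ S, 0 ≤ (inner ℂ (B s) s : ℂ).re) (x : H) :
    CFC.sqrt (blockA B S) (CFC.sqrt (blockA B S) x) = blockA B S x := by
  have h := DFunLike.congr_fun (auxm_mul S B hB hpos) x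
  simpa [ContinuousLinearMap.mul_apply] using h

lemma auxm_inner (x y : H) :
    ⟪CFC.sqrt (blockA B S) x, y⟫ = ⟪x, CFC.sqrt (blockA B S) y⟫ :=
  (isSelfAdjoint_iff_isSymmetric.mp (auxm_sa S B)) x y

lemma auxm_P (hB : IsSelfAdjoint B) (hpos : ∀ s ∈ S, 0 ≤ (inner ℂ (B s) s : ℂ).re) (x : H) :
    CFC.sqrt (blockA B S) (projL S x) = CFC.sqrt (blockA B S) x := by
  set m := CFC.sqrt (blockA B S) with hm
  have hv : m (x - projL S x) = 0 := by
    have ha : blockA B S (x - projL S x) = 0 := by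
      rw [auxA_apply, auxP_orth, map_zero, map_zero]
    have h1 : ⟪m (x - projL S x), m (x - projL S x)⟫ = 0 := by
      rw [auxm_inner S B, auxm_app S B hB hpos, ha, inner_zero_right]
    rwa [inner_self_eq_zero] at h1
  have h2 : m x - m (projL S x) = 0 := by rw [← map_sub]; exact hv
  rw [sub_eq_zero] at h2
  exact h2.symm

lemma auxm_ker (hB : IsSelfAdjoint B) (hpos : ∀ s ∈ S, 0 ≤ (inner ℂ (B s) s : ℂ).re) :
    LinearMap.ker ((CFC.sqrt (blockA B S) : H →L[ℂ] H) : H →ₗ[ℂ] H) = LinearMap.ker (blockA B S : H →ₗ[ℂ] H) := by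
  set m := CFC.sqrt (blockA B S) with hm
  ext x
  simp only [LinearMap.mem_ker, ContinuousLinearMap.coe_coe]
  constructor
  · intro h
    rw [← auxm_app S B hB hpos, h, map_zero]
  · intro h
    have h1 : ⟪m x, m x⟫ = 0 := by
      rw [auxm_inner S B, auxm_app S B hB hpos, h, inner_zero_right]
    rwa [inner_self_eq_zero] at h1

lemma auxUnique (a m' : H →L[ℂ] H) (ha : 0 ≤ a) (hm' : m'.IsPositive)
    (h4 : m' ^ 4 = adjoint a * a) : m' = CFC.sqrt a := by
  have hasa : IsSelfAdjoint a := ((nonneg_iff_isPositive a).mp ha).isSelfAdjoint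
  have h4' : (m' * m') * (m' * m') = a * a := by
    have e1 : m' ^ 4 = (m' * m') * (m' * m') := by
      rw [show (4 : ℕ) = 2 + 2 from rfl, pow_add, sq]
    rw [← e1, h4, ← star_eq_adjoint, hasa.star_eq]
  have h2 : 0 ≤ m' * m' := by
    have := star_mul_self_nonneg m'
    rwa [hm'.isSelfAdjoint.star_eq] at this
  have hsq : m' * m' = a := by
    have e2 : CFC.sqrt (a * a) = m' * m' := CFC.sqrt_unique h4' h2
    have e3 : CFC.sqrt (a * a) = a := CFC.sqrt_mul_self a ha
    rw [← e2, e3]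
  exact (CFC.sqrt_unique hsq ((nonneg_iff_isPositive m').mpr hm')).symm

lemma auxSqrtAbs (hB : IsSelfAdjoint B) (hpos : ∀ s ∈ S, 0 ≤ (inner ℂ (B s) s : ℂ).re) :
    IsSqrtAbs (blockA B S) (CFC.sqrt (blockA B S)) := by
  refine ⟨auxm_pos S B, ?_⟩
  have hasa : IsSelfAdjoint (blockA B S) := (auxA_pos S B hB hpos).isSelfAdjoint
  rw [show (4 : ℕ) = 2 + 2 from rfl, pow_add, sq, auxm_mul S B hB hpos,
    ← star_eq_adjoint, hasa.star_eq]

end SqrtLemmas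

section MainLemmas

local notation "⟪" x ", " y "⟫" => @inner ℂ _ _ x y

variable (S : Submodule ℂ H) [CompleteSpace S] (B : H →L[ℂ] H)

lemma auxXsa (hB : IsSelfAdjoint B) (Q : H →L[ℂ] H) :
    IsSelfAdjoint (adjoint Q * B * Q) := by
  show star (adjoint Q * B * Q) = adjoint Q * B * Q
  simp only [star_mul, hB.star_eq, ← star_eq_adjoint, star_star, mul_assoc]

lemma auxCsa (hB : IsSelfAdjoint B) : IsSelfAdjoint (blockC B S) := by
  show star ((1 - projL S) * B * (1 - projL S)) = (1 - projL S) * B * (1 - projL S)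
  have h1 : star (1 - projL S) = 1 - projL S := by
    rw [star_sub, star_one, (auxP_sa S).star_eq]
  simp only [star_mul, h1, hB.star_eq, mul_assoc]

lemma auxZsa (hB : IsSelfAdjoint B) (f : H →L[ℂ] H) :
    IsSelfAdjoint (blockC B S - adjoint f * f) := by
  refine (auxCsa S B hB).sub ?_
  show star (adjoint f * f) = adjoint f * f
  simp only [star_mul, ← star_eq_adjoint, star_star]

lemma auxZval (f : H →L[ℂ] H) (y : H) :
    RCLike.re ⟪(blockC B S - adjoint f * f) y, y⟫
      = RCLike.re ⟪blockC B S y, y⟫ - ‖f y‖ ^ 2 := by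
  rw [ContinuousLinearMap.sub_apply, inner_sub_left, map_sub]
  have h1 : (adjoint f * f) y = adjoint f (f y) := rfl
  rw [h1, adjoint_inner_left, inner_self_eq_norm_sq]

lemma auxKey (hB : IsSelfAdjoint B) (hpos : ∀ s ∈ S, 0 ≤ (inner ℂ (B s) s : ℂ).re)
    (f : H →L[ℂ] H) (hf1 : ∀ y, CFC.sqrt (blockA B S) (f y) = blockB B S y)
    (Q G : H →L[ℂ] H) (y s : H) (hs : s ∈ S) (hQy : Q y = (y - projL S y) + s) :
    RCLike.re ⟪(adjoint Q * B * Q - G) y, y⟫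
      = RCLike.re ⟪(blockC B S - adjoint f * f - G) y, y⟫
        + ‖f y + CFC.sqrt (blockA B S) s‖ ^ 2 := by
  rw [ContinuousLinearMap.sub_apply, inner_sub_left, map_sub,
    ContinuousLinearMap.sub_apply, inner_sub_left, map_sub]
  rw [auxXval S B hB Q y s hs hQy, auxZval S B f y]
  have h1 : RCLike.re ⟪blockA B S s, s⟫ = ‖CFC.sqrt (blockA B S) s‖ ^ 2 := by
    rw [← auxm_app S B hB hpos s, auxm_inner S B (CFC.sqrt (blockA B S) s) s,
      inner_self_eq_norm_sq]
  have h2 : RCLike.re ⟪blockB B S y, s⟫ = RCLike.re ⟪f y, CFC.sqrt (blockA B S) s⟫ := by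
    rw [← hf1 y, auxm_inner S B (f y) s]
  rw [h1, h2, norm_add_sq (𝕜 := ℂ)]
  ring

lemma auxfP (hB : IsSelfAdjoint B) (hpos : ∀ s ∈ S, 0 ≤ (inner ℂ (B s) s : ℂ).re)
    (f : H →L[ℂ] H) (hf1 : ∀ y, CFC.sqrt (blockA B S) (f y) = blockB B S y)
    (hf2 : ∀ y, f y ∈ (LinearMap.ker ((CFC.sqrt (blockA B S) : H →L[ℂ] H) : H →ₗ[ℂ] H))ᗮ) (x : H) :
    f (projL S x) = 0 := by
  have h1 : CFC.sqrt (blockA B S) (f (projL S x)) = 0 := by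
    rw [hf1, auxB_apply, auxP_idem, sub_self, map_zero, map_zero]
  have h2 : f (projL S x) ∈ LinearMap.ker ((CFC.sqrt (blockA B S) : H →L[ℂ] H) : H →ₗ[ℂ] H) := LinearMap.mem_ker.mpr h1
  have h3 := (Submodule.mem_orthogonal _ _).mp (hf2 (projL S x)) _ h2
  rwa [inner_self_eq_zero] at h3

lemma auxGLB (hB : IsSelfAdjoint B) (hpos : ∀ s ∈ S, 0 ≤ (inner ℂ (B s) s : ℂ).re)
    (f : H →L[ℂ] H) (hf1 : ∀ y, CFC.sqrt (blockA B S) (f y) = blockB B S y)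
    (hf2 : ∀ y, f y ∈ (LinearMap.ker ((CFC.sqrt (blockA B S) : H →L[ℂ] H) : H →ₗ[ℂ] H))ᗮ) :
    IsGLBOf (comprSet1 B S) (blockC B S - adjoint f * f) := by
  refine ⟨auxZsa S B hB f, ?_, ?_⟩
  · rintro X ⟨Q, hQ2, hker, rfl⟩
    refine ⟨isSelfAdjoint_iff_isSymmetric.mp ((auxXsa B hB Q).sub (auxZsa S B hB f)), fun y => ?_⟩
    obtain ⟨s, hs, hQy⟩ := auxQ_mem S Q hQ2 hker y
    show 0 ≤ RCLike.re
      ⟪(adjoint Q * B * Q - (blockC B S - adjoint f * f)) y, y⟫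
    rw [auxKey S B hB hpos f hf1 Q (blockC B S - adjoint f * f) y s hs hQy]
    have h0 : RCLike.re ⟪(blockC B S - adjoint f * f - (blockC B S - adjoint f * f)) y, y⟫
        = 0 := by
      rw [sub_self]
      simp
    rw [h0, zero_add]
    positivity
  · intro F hFsa hF
    refine ⟨isSelfAdjoint_iff_isSymmetric.mp ((auxZsa S B hB f).sub hFsa), fun y => ?_⟩
    show 0 ≤ RCLike.re ⟪(blockC B S - adjoint f * f - F) y, y⟫
    set t := RCLike.re ⟪(blockC B S - adjoint f * f - F) y, y⟫ with ht
    by_contra hneg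
    push_neg at hneg
    have hεpos : 0 < -t := neg_pos.mpr hneg
    by_cases hy : y - projL S y = 0
    · -- trivial case : y ∈ S
      obtain ⟨hQ2, hker⟩ := auxQ_of_q S 0 (fun z => by simp) (fun z => by simp)
      set Q₁ : H →L[ℂ] H := 1 - projL S + 0 with hQdef
      have hmem : adjoint Q₁ * B * Q₁ ∈ comprSet1 B S :=
        ⟨_, hQ2, hker, rfl⟩
      have h8 : 0 ≤ RCLike.re ⟪(adjoint Q₁ * B * Q₁ - F) y, y⟫ :=
        (hF _ hmem).2 y
      have hQy : Q₁ y = (y - projL S y) + (0 : H) := by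
        rw [hQdef]; simp
      rw [auxKey S B hB hpos f hf1 _ F y 0 S.zero_mem hQy] at h8
      have hfy : f y = 0 := by
        have hyP : y = projL S y := by rwa [sub_eq_zero] at hy
        rw [hyP, auxfP S B hB hpos f hf1 hf2]
      rw [hfy, map_zero, add_zero, norm_zero] at h8
      rw [← ht] at h8
      simp at h8
      linarith
    · -- main case
      set m := CFC.sqrt (blockA B S) with hm
      set y₂ := y - projL S y with hy₂
      have hfycl : -(f y) ∈ (LinearMap.range (m : H →ₗ[ℂ] H)).topologicalClosure := by
        refine Submodule.neg_mem _ ?_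
        rw [auxClosure m (auxm_sa S B)]
        exact hf2 y
      have h6 : -(f y) ∈ closure ((LinearMap.range (m : H →ₗ[ℂ] H) : Submodule ℂ H) : Set H) := hfycl
      obtain ⟨z, hz1, hz2⟩ := Metric.mem_closure_iff.mp h6 (Real.sqrt (-t))
        (Real.sqrt_pos.mpr hεpos)
      obtain ⟨x, rfl⟩ := LinearMap.mem_range.mp hz1
      set x₀ := projL S x with hx₀
      have hx : ‖f y + m x₀‖ < Real.sqrt (-t) := by
        have e1 : -(f y) - m x = -(f y + m x) := by abel
        have e2 : dist (-(f y)) (m x) = ‖f y + m x‖ := by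
          rw [dist_eq_norm, e1, norm_neg]
        rw [hx₀, auxm_P S B hB hpos x, ← e2]
        exact hz2
      have hy₂ne : ‖y₂‖ ≠ 0 := fun h => hy (norm_eq_zero.mp h)
      set c0 : ℂ := ((‖y₂‖ : ℂ) ^ 2)⁻¹ with hc0
      set q : H →L[ℂ] H := c0 • ((innerSL ℂ y₂).smulRight x₀) with hq
      have hq_apply : ∀ z : H, q z = c0 • (⟪y₂, z⟫ • x₀) := fun z => rfl
      have hPy₂ : projL S y₂ = 0 := auxP_orth S y
      have hinP : ∀ z : H, ⟪y₂, projL S z⟫ = 0 := by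
        intro z
        rw [← auxP_inner S y₂ z, hPy₂, inner_zero_left]
      have hq1 : ∀ z, q z ∈ S := fun z => by
        rw [hq_apply]
        exact S.smul_mem _ (S.smul_mem _ (auxP_mem S x))
      have hq2 : ∀ z, q (projL S z) = 0 := by
        intro z
        rw [hq_apply, hinP, zero_smul, smul_zero]
      have hqy : q y = x₀ := by
        rw [hq_apply]
        have h7 : ⟪y₂, y⟫ = (‖y₂‖ : ℂ) ^ 2 := by
          have e3 : y = y₂ + projL S y := by rw [hy₂]; abel
          rw [e3, inner_add_right]
          rw [show ⟪y₂, projL S y⟫ = 0 from hinP y, add_zero]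
          exact inner_self_eq_norm_sq_to_K y₂
        rw [h7, smul_smul, hc0]
        rw [inv_mul_cancel₀ (by
          simpa using pow_ne_zero 2 ((Complex.ofReal_ne_zero).mpr hy₂ne)), one_smul]
      obtain ⟨hQ2, hker⟩ := auxQ_of_q S q hq1 hq2
      set Q₁ : H →L[ℂ] H := 1 - projL S + q with hQdef
      have hmem : adjoint Q₁ * B * Q₁ ∈ comprSet1 B S :=
        ⟨_, hQ2, hker, rfl⟩
      have h8 : 0 ≤ RCLike.re ⟪(adjoint Q₁ * B * Q₁ - F) y, y⟫ :=
        (hF _ hmem).2 y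
      have hQy : Q₁ y = (y - projL S y) + q y := rfl
      rw [auxKey S B hB hpos f hf1 _ F y (q y) (hq1 y) hQy, hqy, ← ht] at h8
      have h9 : ‖f y + m x₀‖ ^ 2 < -t := by
        have h10 : ‖f y + m x₀‖ ^ 2 < Real.sqrt (-t) ^ 2 :=
          pow_lt_pow_left₀ hx (norm_nonneg _) (by norm_num)
        rwa [Real.sq_sqrt hεpos.le] at h10
      linarith

end MainLemmas

section RieszDouglas

local notation "⟪" x ", " y "⟫" => @inner ℂ _ _ x y

lemma auxRiesz (m : H →L[ℂ] H) (hm : IsSelfAdjoint m) (v : H) (C : ℝ)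
    (h : ∀ x : H, ‖⟪v, x⟫‖ ≤ C * ‖m x‖) : ∃ w : H, m w = v := by
  have hsym := (isSelfAdjoint_iff_isSymmetric).mp hm
  have hwd : ∀ x x' : H, m x = m x' → ⟪v, x⟫ = ⟪v, x'⟫ := by
    intro x x' hxx
    have h0 : ‖⟪v, x - x'⟫‖ ≤ C * ‖m (x - x')‖ := h _
    rw [map_sub, hxx, sub_self, norm_zero, mul_zero] at h0
    have h1 : ⟪v, x - x'⟫ = 0 := norm_le_zero_iff.mp h0
    rwa [inner_sub_right, sub_eq_zero] at h1
  set E : Submodule ℂ H := LinearMap.range (m : H →ₗ[ℂ] H) with hE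
  have hmem : ∀ u : E, ∃ x : H, m x = (u : H) := fun u => LinearMap.mem_range.mp u.2
  let φ₀ : E →ₗ[ℂ] ℂ :=
    { toFun := fun u => ⟪v, Classical.choose (hmem u)⟫
      map_add' := by
        intro u u'
        rw [← inner_add_right]
        refine hwd _ _ ?_
        rw [map_add, Classical.choose_spec (hmem u), Classical.choose_spec (hmem u'),
          Classical.choose_spec (hmem (u + u'))]
        rfl
      map_smul' := by
        intro c u
        simp only [RingHom.id_apply]
        rw [smul_eq_mul, ← inner_smul_right]
        refine hwd _ _ ?_
        rw [map_smul, Classical.choose_spec (hmem u), Classical.choose_spec (hmem (c • u))]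
        rfl }
  have hb : ∀ u : E, ‖φ₀ u‖ ≤ (max C 0) * ‖u‖ := by
    intro u
    have h1 : ‖⟪v, Classical.choose (hmem u)⟫‖ ≤ C * ‖m (Classical.choose (hmem u))‖ := h _
    rw [Classical.choose_spec (hmem u)] at h1
    refine h1.trans ?_
    have : ‖(u : H)‖ = ‖u‖ := rfl
    rw [this]
    exact mul_le_mul_of_nonneg_right (le_max_left _ _) (norm_nonneg _)
  let φ : E →L[ℂ] ℂ := φ₀.mkContinuous (max C 0) hb
  obtain ⟨g, hg, -⟩ := exists_extension_norm_eq E φ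
  refine ⟨(InnerProductSpace.toDual ℂ H).symm g, ?_⟩
  refine ext_inner_right ℂ fun u => ?_
  have h2 : ⟪m ((InnerProductSpace.toDual ℂ H).symm g), u⟫
      = ⟪(InnerProductSpace.toDual ℂ H).symm g, m u⟫ := hsym _ u
  rw [h2, InnerProductSpace.toDual_symm_apply]
  have hmu : m u ∈ E := ⟨u, rfl⟩
  have h3 := hg ⟨m u, hmu⟩
  rw [h3]
  show ⟪v, Classical.choose (hmem ⟨m u, hmu⟩)⟫ = ⟪v, u⟫
  exact hwd _ _ (by rw [Classical.choose_spec (hmem ⟨m u, hmu⟩)])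

lemma auxDouglas (m b' : H →L[ℂ] H) (hm : IsSelfAdjoint m)
    (hr : ∀ y : H, ∃ x : H, m x = b' y) :
    ∃ f : H →L[ℂ] H, (∀ y, m (f y) = b' y) ∧ ∀ y, f y ∈ (LinearMap.ker (m : H →ₗ[ℂ] H))ᗮ := by
  classical
  set K : Submodule ℂ H := LinearMap.ker (m : H →ₗ[ℂ] H) with hK
  haveI : CompleteSpace K := (ContinuousLinearMap.isClosed_ker m).completeSpace_coe
  set N : Submodule ℂ H := Kᗮ with hN
  haveI : CompleteSpace N := (Submodule.isClosed_orthogonal K).completeSpace_coe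
  have hNK : Nᗮ = K := Submodule.orthogonal_orthogonal K
  let g0 : H → H := fun y => (N.orthogonalProjectionOnto (Classical.choose (hr y)) : H)
  have hg0N : ∀ y, g0 y ∈ N := fun y => Submodule.coe_mem _
  have hg0m : ∀ y, m (g0 y) = b' y := by
    intro y
    have h1 : Classical.choose (hr y) - g0 y ∈ K := by
      rw [← hNK]; exact Submodule.sub_starProjection_mem_orthogonal _
    have h2 : m (Classical.choose (hr y) - g0 y) = 0 := h1
    rw [map_sub, sub_eq_zero] at h2
    rw [← h2, Classical.choose_spec (hr y)]
  have huniq : ∀ z z' : H, z ∈ N → z' ∈ N → m z = m z' → z = z' := by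
    intro z z' hz hz' hmz
    have h1 : z - z' ∈ K := by
      show m (z - z') = 0
      rw [map_sub, hmz, sub_self]
    have h2 : z - z' ∈ N := Submodule.sub_mem _ hz hz'
    have h3 : ⟪z - z', z - z'⟫ = 0 := h2 (z - z') h1
    rw [inner_self_eq_zero, sub_eq_zero] at h3
    exact h3
  let flin : H →ₗ[ℂ] H :=
    { toFun := g0
      map_add' := by
        intro y y'
        refine huniq _ _ (hg0N _) (Submodule.add_mem _ (hg0N y) (hg0N y')) ?_
        rw [map_add, hg0m, hg0m, hg0m, map_add]
      map_smul' := by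
        intro c y
        simp only [RingHom.id_apply]
        refine huniq _ _ (hg0N _) (Submodule.smul_mem _ _ (hg0N y)) ?_
        rw [map_smul, hg0m, hg0m, map_smul] }
  have hcl : ∀ (u : ℕ → H) (x y : H), Filter.Tendsto u Filter.atTop (nhds x) →
      Filter.Tendsto (flin ∘ u) Filter.atTop (nhds y) → y = flin x := by
    intro u x y hu hgu
    have h1 : Filter.Tendsto (fun n => m (g0 (u n))) Filter.atTop (nhds (m y)) :=
      (m.continuous.tendsto y).comp hgu
    have h2 : (fun n => m (g0 (u n))) = fun n => b' (u n) := by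
      funext n; exact hg0m (u n)
    have h3 : Filter.Tendsto (fun n => b' (u n)) Filter.atTop (nhds (b' x)) :=
      (b'.continuous.tendsto x).comp hu
    have h4 : m y = b' x := tendsto_nhds_unique (h2 ▸ h1) h3
    have h5 : y ∈ N := by
      refine (Submodule.isClosed_orthogonal K).mem_of_tendsto hgu ?_
      exact Filter.Eventually.of_forall fun n => hg0N (u n)
    refine huniq _ _ h5 (hg0N x) ?_
    rw [h4]
    show b' x = m (g0 x)
    rw [hg0m]
  let f : H →L[ℂ] H := ContinuousLinearMap.ofSeqClosedGraph hcl
  have hf : ∀ y, f y = g0 y := fun _ => rfl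
  exact ⟨f, fun y => by rw [hf]; exact hg0m y, fun y => by rw [hf]; exact hg0N y⟩


end RieszDouglas


section HardLemmas

local notation "⟪" x ", " y "⟫" => @inner ℂ _ _ x y

variable (S : Submodule ℂ H) [CompleteSpace S] (B : H →L[ℂ] H)

lemma auxbP (v w : H) : ⟪blockB B S w, projL S v⟫ = ⟪blockB B S w, v⟫ := by
  rw [auxB_apply, auxP_inner, auxP_idem, ← auxP_inner]

lemma auxHard (hB : IsSelfAdjoint B) (hpos : ∀ s ∈ S, 0 ≤ (inner ℂ (B s) s : ℂ).re)
    (Z : H →L[ℂ] H) (hZ : IsGLBOf (comprSet1 B S) Z) :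
    ∃ f : H →L[ℂ] H, (∀ y, CFC.sqrt (blockA B S) (f y) = blockB B S y) ∧
      ∀ y, f y ∈ (LinearMap.ker ((CFC.sqrt (blockA B S) : H →L[ℂ] H) : H →ₗ[ℂ] H))ᗮ := by
  set m := CFC.sqrt (blockA B S) with hm
  have hsolv : ∀ y : H, ∃ x : H, m x = blockB B S y := by
    intro y
    by_cases hy : y - projL S y = 0
    · exact ⟨0, by rw [map_zero, auxB_apply, hy, map_zero, map_zero]⟩
    · set y₂ := y - projL S y with hy₂
      set γ := RCLike.re ⟪blockC B S y, y⟫ - RCLike.re ⟪Z y, y⟫ with hγ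
      have hγ0 : 0 ≤ γ := by
        obtain ⟨hQ2, hker⟩ := auxQ_of_q S 0 (fun z => by simp) (fun z => by simp)
        set Q₁ : H →L[ℂ] H := 1 - projL S + 0 with hQdef
        have hmem : adjoint Q₁ * B * Q₁ ∈ comprSet1 B S := ⟨_, hQ2, hker, rfl⟩
        have h8 : 0 ≤ RCLike.re ⟪(adjoint Q₁ * B * Q₁ - Z) y, y⟫ := (hZ.2.1 _ hmem).2 y
        have hQy : Q₁ y = (y - projL S y) + (0 : H) := by rw [hQdef]; simp
        rw [ContinuousLinearMap.sub_apply, inner_sub_left, map_sub,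
          auxXval S B hB Q₁ y 0 S.zero_mem hQy] at h8
        simp only [map_zero, inner_zero_right, mul_zero, add_zero] at h8
        rw [hγ]
        linarith
      have hPy₂ : projL S y₂ = 0 := auxP_orth S y
      have hinP : ∀ z : H, ⟪y₂, projL S z⟫ = 0 := by
        intro z
        rw [← auxP_inner S y₂ z, hPy₂, inner_zero_left]
      have hy₂ne : ‖y₂‖ ≠ 0 := fun h => hy (norm_eq_zero.mp h)
      have hquad : ∀ x₀, x₀ ∈ S → (RCLike.re ⟪blockB B S y, x₀⟫) ^ 2
          ≤ RCLike.re ⟪blockA B S x₀, x₀⟫ * γ := by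
        intro x₀ hx₀
        set c0 : ℂ := ((‖y₂‖ : ℂ) ^ 2)⁻¹ with hc0
        set q : H →L[ℂ] H := c0 • ((innerSL ℂ y₂).smulRight x₀) with hq
        have hq_apply : ∀ z : H, q z = c0 • (⟪y₂, z⟫ • x₀) := fun z => rfl
        have hq1 : ∀ z, q z ∈ S := fun z => by
          rw [hq_apply]; exact S.smul_mem _ (S.smul_mem _ hx₀)
        have hq2 : ∀ z, q (projL S z) = 0 := by
          intro z; rw [hq_apply, hinP, zero_smul, smul_zero]
        have hqy : q y = x₀ := by
          rw [hq_apply]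
          have h7 : ⟪y₂, y⟫ = (‖y₂‖ : ℂ) ^ 2 := by
            have e3 : y = y₂ + projL S y := by rw [hy₂]; abel
            nth_rewrite 1 [e3]
            rw [inner_add_right, show ⟪y₂, projL S y⟫ = 0 from hinP y, add_zero]
            exact inner_self_eq_norm_sq_to_K y₂
          rw [h7, smul_smul, hc0,
            inv_mul_cancel₀ (by simpa using pow_ne_zero 2 ((Complex.ofReal_ne_zero).mpr hy₂ne)),
            one_smul]
        have key : ∀ t : ℝ, 0 ≤ RCLike.re ⟪blockA B S x₀, x₀⟫ * (t * t)
            + (2 * RCLike.re ⟪blockB B S y, x₀⟫) * t + γ := by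
          intro t
          set qt : H →L[ℂ] H := ((t : ℂ)) • q with hqt
          have hqt1 : ∀ z, qt z ∈ S := fun z => by
            rw [hqt]; exact S.smul_mem _ (hq1 z)
          have hqt2 : ∀ z, qt (projL S z) = 0 := fun z => by
            rw [hqt]
            show (t : ℂ) • q (projL S z) = 0
            rw [hq2, smul_zero]
          obtain ⟨hQ2, hker⟩ := auxQ_of_q S qt hqt1 hqt2
          set Q₁ : H →L[ℂ] H := 1 - projL S + qt with hQdef
          have hmem : adjoint Q₁ * B * Q₁ ∈ comprSet1 B S := ⟨_, hQ2, hker, rfl⟩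
          have h8 : 0 ≤ RCLike.re ⟪(adjoint Q₁ * B * Q₁ - Z) y, y⟫ := (hZ.2.1 _ hmem).2 y
          have hQy : Q₁ y = (y - projL S y) + qt y := rfl
          rw [ContinuousLinearMap.sub_apply, inner_sub_left, map_sub,
            auxXval S B hB Q₁ y (qt y) (hqt1 y) hQy] at h8
          have hqty : qt y = (t : ℂ) • x₀ := by
            rw [hqt]
            show (t : ℂ) • q y = _
            rw [hqy]
          rw [hqty] at h8
          have e1 : RCLike.re ⟪blockA B S ((t : ℂ) • x₀), (t : ℂ) • x₀⟫
              = RCLike.re ⟪blockA B S x₀, x₀⟫ * (t * t) := by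
            rw [map_smul, inner_smul_left, inner_smul_right]
            simp only [RCLike.re_to_complex, Complex.conj_ofReal, Complex.mul_re,
              Complex.ofReal_re, Complex.ofReal_im]
            ring
          have e2 : RCLike.re ⟪blockB B S y, (t : ℂ) • x₀⟫
              = RCLike.re ⟪blockB B S y, x₀⟫ * t := by
            rw [inner_smul_right]
            simp only [RCLike.re_to_complex, Complex.mul_re, Complex.ofReal_re,
              Complex.ofReal_im]
            ring
          rw [e1, e2] at h8
          rw [hγ]
          linarith
        have hd := discrim_le_zero key
        rw [discrim] at hd
        nlinarith [hd]
      have hquadm : ∀ x : H, (RCLike.re ⟪blockB B S y, x⟫) ^ 2 ≤ ‖m x‖ ^ 2 * γ := by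
        intro x
        have h1 := hquad (projL S x) (auxP_mem S x)
        have e1 : RCLike.re ⟪blockA B S (projL S x), projL S x⟫ = ‖m x‖ ^ 2 := by
          rw [← auxm_app S B hB hpos, auxm_inner S B, inner_self_eq_norm_sq,
            auxm_P S B hB hpos]
        have e2 : ⟪blockB B S y, projL S x⟫ = ⟪blockB B S y, x⟫ := auxbP S B x y
        rw [e1, e2] at h1
        exact h1
      have hnorm : ∀ x : H, ‖⟪blockB B S y, x⟫‖ ^ 2 ≤ ‖m x‖ ^ 2 * γ := by
        intro x
        by_cases hz : ⟪blockB B S y, x⟫ = 0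
        · rw [hz, norm_zero]
          simpa using mul_nonneg (sq_nonneg ‖m x‖) hγ0
        · set z := ⟪blockB B S y, x⟫ with hzdef
          set c : ℂ := (starRingEnd ℂ) z / (‖z‖ : ℂ) with hc
          have hzne : ‖z‖ ≠ 0 := norm_ne_zero_iff.mpr hz
          have hcnorm : ‖c‖ = 1 := by
            rw [hc, norm_div]
            simp only [RCLike.norm_conj]
            rw [Complex.norm_real, Real.norm_eq_abs, abs_of_nonneg (norm_nonneg z)]
            exact div_self hzne
          have h2 := hquadm (c • x)
          have e3 : ⟪blockB B S y, c • x⟫ = ((‖z‖ : ℝ) : ℂ) := by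
            rw [inner_smul_right, ← hzdef, hc, div_mul_eq_mul_div]
            rw [show (starRingEnd ℂ) z * z = (‖z‖ : ℂ) * (‖z‖ : ℂ) by
              rw [mul_comm, Complex.mul_conj]
              norm_cast
              rw [Complex.normSq_eq_norm_sq, sq]]
            rw [mul_div_assoc, div_self (by exact_mod_cast hzne), mul_one]
          have e4 : ‖m (c • x)‖ ^ 2 = ‖m x‖ ^ 2 := by
            rw [map_smul, norm_smul, hcnorm, one_mul]
          rw [e3, e4] at h2
          simpa using h2
      have hbd : ∀ x : H, ‖⟪blockB B S y, x⟫‖ ≤ Real.sqrt γ * ‖m x‖ := by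
        intro x
        have h1 := hnorm x
        rw [show ‖⟪blockB B S y, x⟫‖ = Real.sqrt (‖⟪blockB B S y, x⟫‖ ^ 2) from
          (Real.sqrt_sq (norm_nonneg _)).symm]
        refine (Real.sqrt_le_sqrt h1).trans ?_
        rw [Real.sqrt_mul (sq_nonneg _), Real.sqrt_sq (norm_nonneg _)]
        exact le_of_eq (mul_comm _ _)
      exact auxRiesz m (auxm_sa S B) (blockB B S y) (Real.sqrt γ) hbd
  obtain ⟨f, hff, hfr⟩ := auxDouglas m (blockB B S) (auxm_sa S B) hsolv
  exact ⟨f, hff, hfr⟩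

lemma auxSchur (hB : IsSelfAdjoint B) (hpos : ∀ s ∈ S, 0 ≤ (inner ℂ (B s) s : ℂ).re)
    (f : H →L[ℂ] H)
    (hf1 : ∀ y, CFC.sqrt (blockA B S) (f y) = blockB B S y)
    (hf2 : ∀ y, f y ∈ (LinearMap.ker ((CFC.sqrt (blockA B S) : H →L[ℂ] H) : H →ₗ[ℂ] H))ᗮ) :
    IsSchur B S (blockC B S - adjoint f * f) := by
  classical
  set m := CFC.sqrt (blockA B S) with hm
  set K : Submodule ℂ H := LinearMap.ker (blockA B S : H →ₗ[ℂ] H) with hK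
  haveI hKc : CompleteSpace K := (ContinuousLinearMap.isClosed_ker _).completeSpace_coe
  haveI : CompleteSpace (Kᗮ : Submodule ℂ H) := (Submodule.isClosed_orthogonal K).completeSpace_coe
  have hsyma0 := isSelfAdjoint_iff_isSymmetric.mp (auxA_pos S B hB hpos).isSelfAdjoint
  have hsyma : ∀ u w : H, ⟪blockA B S u, w⟫ = ⟪u, blockA B S w⟫ := fun u w => hsyma0 u w
  refine ⟨m, projL Kᗮ, f, auxSqrtAbs S B hB hpos, ?_, ?_, ?_, ?_, ?_, ?_⟩
  · -- ker u = ker a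
    ext x
    simp only [LinearMap.mem_ker, ContinuousLinearMap.coe_coe]
    constructor
    · intro hx
      have h1 : Kᗮ.orthogonalProjectionOnto x = 0 := Submodule.coe_eq_zero.mp hx
      have h2 : x ∈ Kᗮᗮ := Submodule.orthogonalProjectionOnto_eq_zero_iff.mp h1
      rw [Submodule.orthogonal_orthogonal] at h2
      exact LinearMap.mem_ker.mp h2
    · intro hx
      have h2 : x ∈ Kᗮᗮ := Submodule.le_orthogonal_orthogonal K (LinearMap.mem_ker.mpr hx)
      have h1 : Kᗮ.orthogonalProjectionOnto x = 0 := Submodule.orthogonalProjectionOnto_eq_zero_iff.mpr h2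
      show (Kᗮ.orthogonalProjectionOnto x : H) = 0
      rw [h1]
      rfl
  · -- isometry on Kᗮ
    intro x hx
    rw [auxP_eq Kᗮ hx]
  · -- a = u * m^2
    ext x
    have hmem : blockA B S x ∈ Kᗮ := by
      intro k hk
      have hk0 : blockA B S k = 0 := LinearMap.mem_ker.mp hk
      rw [← hsyma k x]
      show ⟪blockA B S k, x⟫ = 0
      rw [hk0, inner_zero_left]
    show blockA B S x = (projL Kᗮ * m ^ 2) x
    rw [show m ^ 2 = m * m from sq m]
    show blockA B S x = projL Kᗮ (m (m x))
    rw [auxm_app S B hB hpos, auxP_eq Kᗮ hmem]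
  · -- m * f = b
    ext y
    exact hf1 y
  · -- range f
    rintro v ⟨y, rfl⟩
    show f y ∈ (LinearMap.range (m : H →ₗ[ℂ] H)).topologicalClosure
    rw [auxClosure m (auxm_sa S B)]
    exact hf2 y
  · -- Y equation
    have huf : projL Kᗮ * f = f := by
      ext y
      show projL Kᗮ (f y) = f y
      refine auxP_eq Kᗮ ?_
      have := hf2 y
      rwa [auxm_ker S B hB hpos] at this
    rw [huf]

end HardLemmas

/-- For a `B`-nonnegative closed subspace `S`, `B` is `S`-weakly complementable iff
`inf {Q⋆BQ : Q² = Q, N(Q) = S}` exists; in that case the infimum is `B_{/S}`. -/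
theorem stmt_7 (B : H →L[ℂ] H) (hB : IsSelfAdjoint B)
    (S : Submodule ℂ H) [CompleteSpace S]
    (hpos : ∀ s ∈ S, 0 ≤ (inner ℂ (B s) s : ℂ).re) :
    (IsWeaklyComplementable B S ↔ ∃ Z, IsGLBOf (comprSet1 B S) Z) ∧
    (∀ Z, IsGLBOf (comprSet1 B S) Z → IsSchur B S Z) := by
  constructor
  · constructor
    · rintro ⟨m', ⟨hm'pos, hm'4⟩, hrange⟩
      have hmeq : m' = CFC.sqrt (blockA B S) :=
        auxUnique (blockA B S) m' (auxA_nonneg S B hB hpos) hm'pos hm'4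
      have hsolv : ∀ y : H, ∃ x : H, CFC.sqrt (blockA B S) x = blockB B S y := by
        intro y
        have h1 : blockB B S y ∈ LinearMap.range (m' : H →ₗ[ℂ] H) := hrange ⟨y, rfl⟩
        rw [hmeq] at h1
        exact LinearMap.mem_range.mp h1
      obtain ⟨f, hf1, hf2⟩ := auxDouglas _ _ (auxm_sa S B) hsolv
      exact ⟨_, auxGLB S B hB hpos f hf1 hf2⟩
    · rintro ⟨Z, hZ⟩
      obtain ⟨f, hf1, hf2⟩ := auxHard S B hB hpos Z hZ
      refine ⟨CFC.sqrt (blockA B S), auxSqrtAbs S B hB hpos, ?_⟩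
      rintro v ⟨y, rfl⟩
      exact ⟨f y, hf1 y⟩
  · intro Z hZ
    obtain ⟨f, hf1, hf2⟩ := auxHard S B hB hpos Z hZ
    have hglb := auxGLB S B hB hpos f hf1 hf2
    have hZeq : Z = blockC B S - adjoint f * f := by
      have h1 : (Z - (blockC B S - adjoint f * f)).IsPositive :=
        hZ.2.2 _ hglb.1 hglb.2.1
      have h2 : ((blockC B S - adjoint f * f) - Z).IsPositive :=
        hglb.2.2 Z hZ.1 hZ.2.1
      exact le_antisymm ((ContinuousLinearMap.le_def _ _).mpr h2)
        ((ContinuousLinearMap.le_def _ _).mpr h1)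
    rw [hZeq]
    exact auxSchur S B hB hpos f hf1 hf2
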